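/- Let m, p, n be natural numbers, H ∈ ℝ^{n×n} a symmetric positive semidefinite matrix, D ∈ ℝ^{m×m} and E ∈ ℝ^{p×p} symmetric negative definite matrices, G ∈ ℝ^{m×n} and Φ ∈ ℝ^{p×n}. Assume that the only vector x ∈ ℝⁿ with Hx = 0, Gx = 0 and Φx = 0 is x = 0. Then the matrix R = H − Gᵀ D⁻¹ G − Φᵀ E⁻¹ Φ is symmetric positive definite. -/

import Mathlib

open Matrix

private lemma inv_of_neg {k : ℕ} (D : Matrix (Fin k) (Fin k) ℝ) (hD : (-D).PosDef) :
    D⁻¹ = -(-D)⁻¹ := by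
  have hdet : (-D).det ≠ 0 := ne_of_gt hD.det_pos
  have hdetD : D.det ≠ 0 := by
    intro h
    apply hdet
    rw [Matrix.det_neg, h, mul_zero]
  apply Matrix.inv_eq_right_inv
  rw [Matrix.mul_neg, ← Matrix.neg_mul, Matrix.mul_nonsing_inv _ (isUnit_iff_ne_zero.mpr hdet)]

private lemma quad_conj {k l : ℕ} (A : Matrix (Fin k) (Fin l) ℝ)
    (M : Matrix (Fin k) (Fin k) ℝ) (x : Fin l → ℝ) :
    x ⬝ᵥ (Aᵀ * M * A) *ᵥ x = (A *ᵥ x) ⬝ᵥ M *ᵥ (A *ᵥ x) := by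
  rw [← Matrix.mulVec_mulVec, ← Matrix.mulVec_mulVec, Matrix.dotProduct_mulVec,
    Matrix.vecMul_transpose]

/-- The reduced matrix `R = H − Gᵀ D⁻¹ G − Φᵀ E⁻¹ Φ` is symmetric positive
definite (key intermediate claim in the proof of the paper's Lemma 1). -/
theorem reduced_matrix_posDef
    (m p n : ℕ)
    (H : Matrix (Fin n) (Fin n) ℝ) (hH : H.PosSemidef)
    (D : Matrix (Fin m) (Fin m) ℝ) (hD : (-D).PosDef)
    (E : Matrix (Fin p) (Fin p) ℝ) (hE : (-E).PosDef)
    (G : Matrix (Fin m) (Fin n) ℝ) (Φ : Matrix (Fin p) (Fin n) ℝ)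
    (hker : ∀ x : Fin n → ℝ,
      H.mulVec x = 0 → G.mulVec x = 0 → Φ.mulVec x = 0 → x = 0) :
    (H - Gᵀ * D⁻¹ * G - Φᵀ * E⁻¹ * Φ).PosDef := by
  have hDi : ((-D)⁻¹).PosDef := hD.inv
  have hEi : ((-E)⁻¹).PosDef := hE.inv
  have hDrw : D⁻¹ = -(-D)⁻¹ := inv_of_neg D hD
  have hErw : E⁻¹ = -(-E)⁻¹ := inv_of_neg E hE
  have hrw : H - Gᵀ * D⁻¹ * G - Φᵀ * E⁻¹ * Φ
      = H + Gᵀ * (-D)⁻¹ * G + Φᵀ * (-E)⁻¹ * Φ := by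
    rw [hDrw, hErw]
    simp [Matrix.mul_neg, Matrix.neg_mul, sub_neg_eq_add]
  rw [hrw]
  rw [posDef_iff_dotProduct_mulVec]
  constructor
  · have h1 : (Gᵀ * (-D)⁻¹ * G).IsHermitian := by
      simpa using isHermitian_conjTranspose_mul_mul G hDi.isHermitian
    have h2 : (Φᵀ * (-E)⁻¹ * Φ).IsHermitian := by
      simpa using isHermitian_conjTranspose_mul_mul Φ hEi.isHermitian
    exact (hH.1.add h1).add h2
  · intro x hx
    have key : ∀ y : Fin n → ℝ,
        star y ⬝ᵥ (H + Gᵀ * (-D)⁻¹ * G + Φᵀ * (-E)⁻¹ * Φ) *ᵥ y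
        = y ⬝ᵥ H *ᵥ y + (G *ᵥ y) ⬝ᵥ (-D)⁻¹ *ᵥ (G *ᵥ y)
          + (Φ *ᵥ y) ⬝ᵥ (-E)⁻¹ *ᵥ (Φ *ᵥ y) := by
      intro y
      simp [Matrix.add_mulVec, dotProduct_add, quad_conj]
    rw [key x]
    have h1 : 0 ≤ x ⬝ᵥ H *ᵥ x := hH.dotProduct_mulVec_nonneg x
    have h2 : 0 ≤ (G *ᵥ x) ⬝ᵥ (-D)⁻¹ *ᵥ (G *ᵥ x) := hDi.posSemidef.dotProduct_mulVec_nonneg _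
    have h3 : 0 ≤ (Φ *ᵥ x) ⬝ᵥ (-E)⁻¹ *ᵥ (Φ *ᵥ x) := hEi.posSemidef.dotProduct_mulVec_nonneg _
    rcases lt_or_eq_of_le h1 with h | h
    · positivity
    rcases lt_or_eq_of_le h2 with h' | h'
    · have := h'; nlinarith
    rcases lt_or_eq_of_le h3 with h'' | h''
    · nlinarith
    exfalso
    apply hx
    apply hker
    · exact (hH.dotProduct_mulVec_zero_iff x).mp h.symm
    · by_contra hG
      exact (ne_of_gt (hDi.dotProduct_mulVec_pos hG)) h'.symm
    · by_contra hΦ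
      exact (ne_of_gt (hEi.dotProduct_mulVec_pos hΦ)) h''.symm
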